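/- Let A = (Q, q₀, F, Δ) be a finite automaton over Σ_k^{m+1}, and let pr(A) be the automaton over Σ_k^m with the same states, initial state and accepting states, and with transitions (q, a⃗, q') whenever (q, (a⃗, b), q') ∈ Δ for some b ∈ Fin k. Then for all x⃗ ∈ ℕ^m, n ∈ ℕ and q ∈ Q: W_{pr(A),q}(x⃗, n) holds if and only if there exists y < k^n with W_{A,q}((x⃗, y), n); moreover, this is also equivalent to the existence of some y ∈ ℕ with W_{A,q}((x⃗, y), n). -/
import Mathlib


/-- The `i`-th base-`k` digit of `x`. -/
def digit (k x i : ℕ) : ℕ := x / k ^ i % k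

/-- A finite automaton over the alphabet `Σ_k^m = (Fin k)^m`. -/
structure FA (k m : ℕ) where
  Q : Type
  fin : Finite Q
  q0 : Q
  acc : Set Q
  δ : Set (Q × (Fin m → Fin k) × Q)

/-- The run predicate `W_{A,q₁}(x⃗, n)`: the automaton `A` can reach state `q₁`
after reading the first `n` base-`k` digits of `x⃗`, the run being encoded by a
family `(w_q)` of natural numbers. -/
def FA.W {k m : ℕ} (A : FA k m) (q1 : A.Q) (x : Fin m → ℕ) (n : ℕ) : Prop :=
  ∃ w : A.Q → ℕ,
    (∀ q, w q < k ^ (n + 1)) ∧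
    (∀ i ≤ n, ∃ q, digit k (w q) i = 1 ∧ ∀ q' ≠ q, digit k (w q') i = 0) ∧
    digit k (w A.q0) 0 = 1 ∧ digit k (w q1) n = 1 ∧
    ∀ i < n, ∀ q, digit k (w q) i = 1 →
      ∃ a : Fin m → Fin k, ∃ q', (q, a, q') ∈ A.δ ∧ digit k (w q') (i + 1) = 1 ∧
        ∀ j, digit k (x j) i = (a j : ℕ)

/-- The projection automaton `pr(A)`: same states, initial and accepting states
as `A`, with a transition `(q, a⃗, q')` whenever `(q, (a⃗, b), q') ∈ Δ` for some
last digit `b`. -/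
def FA.pr {k m : ℕ} (A : FA k (m + 1)) : FA k m where
  Q := A.Q
  fin := A.fin
  q0 := A.q0
  acc := A.acc
  δ := {t | ∃ b : Fin k, (t.1, Fin.snoc t.2.1 b, t.2.2) ∈ A.δ}

lemma digit_succ (k x i : ℕ) : digit k x (i + 1) = digit k (x / k) i := by
  unfold digit
  rw [Nat.div_div_eq_div_mul, ← pow_succ']

lemma sum_lt (k : ℕ) (hk : 2 ≤ k) (f : ℕ → ℕ) (hf : ∀ i, f i < k) (n : ℕ) :
    (∑ i ∈ Finset.range n, f i * k ^ i) < k ^ n := by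
  induction n with
  | zero => simp
  | succ n ih =>
    rw [Finset.sum_range_succ]
    calc (∑ i ∈ Finset.range n, f i * k ^ i) + f n * k ^ n
        < k ^ n + f n * k ^ n := by omega
      _ ≤ k ^ n + (k - 1) * k ^ n := by
          have := hf n
          exact Nat.add_le_add_left (Nat.mul_le_mul_right _ (by omega)) _
      _ = k ^ (n + 1) := by
          obtain ⟨c, rfl⟩ : ∃ c, k = c + 1 := ⟨k - 1, by omega⟩
          simp only [Nat.add_sub_cancel, pow_succ]
          ring

lemma digit_sum (k : ℕ) (hk : 2 ≤ k) :
    ∀ (n : ℕ) (f : ℕ → ℕ), (∀ j, f j < k) → ∀ i < n,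
      digit k (∑ j ∈ Finset.range n, f j * k ^ j) i = f i := by
  intro n
  induction n with
  | zero => intro f hf i hi; omega
  | succ n ih =>
    intro f hf i hi
    have hsplit : (∑ j ∈ Finset.range (n + 1), f j * k ^ j)
        = f 0 + k * ∑ j ∈ Finset.range n, f (j + 1) * k ^ j := by
      rw [Finset.sum_range_succ' (fun j => f j * k ^ j) n, pow_zero, mul_one,
        Finset.mul_sum, add_comm]
      congr 1
      apply Finset.sum_congr rfl
      intro j _
      rw [pow_succ]; ring
    match i with
    | 0 =>
      unfold digit
      rw [hsplit]
      simp [Nat.add_mul_mod_self_left, Nat.mod_eq_of_lt (hf 0)]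
    | i + 1 =>
      rw [digit_succ, hsplit]
      have : (f 0 + k * ∑ j ∈ Finset.range n, f (j + 1) * k ^ j) / k
          = ∑ j ∈ Finset.range n, f (j + 1) * k ^ j := by
        rw [Nat.add_mul_div_left _ _ (by omega : 0 < k), Nat.div_eq_of_lt (hf 0)]
        omega
      rw [this]
      exact ih (fun j => f (j + 1)) (fun j => hf (j + 1)) i (by omega)

lemma W_of_snoc {k m : ℕ} (A : FA k (m + 1)) (x : Fin m → ℕ) (y n : ℕ) (q : A.Q)
    (h : A.W q (Fin.snoc x y) n) : A.pr.W q x n := by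
  obtain ⟨w, h1, h2, h3, h4, h5⟩ := h
  refine ⟨w, h1, h2, h3, h4, ?_⟩
  intro i hi q' hq'
  obtain ⟨a, q'', hδ, hd, hx⟩ := h5 i hi q' hq'
  refine ⟨fun j => a j.castSucc, q'', ⟨a (Fin.last m), ?_⟩, hd, ?_⟩
  · have : (Fin.snoc (fun j => a (Fin.castSucc j)) (a (Fin.last m)) : Fin (m+1) → Fin k) = a := by
      funext j
      induction j using Fin.lastCases with
      | last => simp
      | cast j => simp
    simpa [FA.pr, this] using hδ
  · intro j
    have := hx j.castSucc
    simpa using this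

/-- `W_{pr(A),q}(x⃗,n)` iff `W_{A,q}((x⃗,y),n)` for some `y < k^n`, and also iff
`W_{A,q}((x⃗,y),n)` for some `y : ℕ`. -/
theorem stmt13 (k m : ℕ) (hk : 2 ≤ k) (hm : 1 ≤ m) (A : FA k (m + 1)) :
    ∀ (x : Fin m → ℕ) (n : ℕ) (q : A.Q),
      (A.pr.W q x n ↔ ∃ y < k ^ n, A.W q (Fin.snoc x y) n) ∧
      (A.pr.W q x n ↔ ∃ y : ℕ, A.W q (Fin.snoc x y) n) := by
  intro x n q1
  have main : A.pr.W q1 x n → ∃ y < k ^ n, A.W q1 (Fin.snoc x y) n := by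
    rintro ⟨w, h1, h2, h3, h4, h5⟩
    have key : ∀ i, ∃ b : Fin k, i < n → ∀ q, digit k (w q) i = 1 →
        ∃ a : Fin m → Fin k, ∃ q', (q, Fin.snoc a b, q') ∈ A.δ ∧
          digit k (w q') (i + 1) = 1 ∧ ∀ j, digit k (x j) i = (a j : ℕ) := by
      intro i
      by_cases hi : i < n
      · obtain ⟨qi, hqi, huniq⟩ := h2 i (le_of_lt hi)
        obtain ⟨a, q', hδ, hd, hx⟩ := h5 i hi qi hqi
        obtain ⟨b, hb⟩ := hδ
        refine ⟨b, fun _ q hq => ?_⟩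
        have : q = qi := by
          by_contra hne
          have := huniq q hne
          omega
        subst this
        exact ⟨a, q', hb, hd, hx⟩
      · exact ⟨⟨0, by omega⟩, fun h => absurd h hi⟩
    choose b hb using key
    set y := ∑ i ∈ Finset.range n, (b i : ℕ) * k ^ i with hy
    have hblt : ∀ i, (b i : ℕ) < k := fun i => (b i).is_lt
    have hylt : y < k ^ n := sum_lt k hk _ hblt n
    have hdy : ∀ i < n, digit k y i = (b i : ℕ) := fun i hi => digit_sum k hk n _ hblt i hi
    refine ⟨y, hylt, w, h1, h2, h3, h4, ?_⟩
    intro i hi q hq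
    obtain ⟨a, q', hδ, hd, hx⟩ := hb i hi q hq
    refine ⟨Fin.snoc a (b i), q', hδ, hd, ?_⟩
    intro j
    induction j using Fin.lastCases with
    | last => simpa using hdy i hi
    | cast j => simpa using hx j
  refine ⟨⟨main, ?_⟩, ⟨fun h => (main h).imp (fun y hy => hy.2), ?_⟩⟩
  · rintro ⟨y, _, h⟩
    exact W_of_snoc A x y n q1 h
  · rintro ⟨y, h⟩
    exact W_of_snoc A x y n q1 h
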